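/- arXiv:2311.00279 — 5 statements merged into one kernel-verified Lean document; each statement's English description precedes it below -/
import Mathlib

section
/- Let u be a degree-two vertex in a finite simple graph G with adjacent neighbors v and w, and suppose v and w have a common neighbor other than u. Then {u,v,w} is a maximal clique of G, and the maximal cliques of size ≥ 2 of G are exactly {u,v,w} together with the maximal cliques of size ≥ 2 of G - u (the edge (v,w) is retained). -/
open SimpleGraph

/-- A maximal clique: a clique not properly contained in any other clique. -/
def MaximalClique {V : Type*} (G : SimpleGraph V) (S : Set V) : Prop :=
  G.IsClique S ∧ ∀ T : Set V, G.IsClique T → S ⊆ T → S = T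

/-- The graph obtained from `G` by deleting vertex `u` (removing all its incident edges). -/
def delVert {V : Type*} (G : SimpleGraph V) (u : V) : SimpleGraph V where
  Adj a b := G.Adj a b ∧ a ≠ u ∧ b ≠ u
  symm := by constructor; intro a b h; exact ⟨h.1.symm, h.2.2, h.2.1⟩
  loopless := by constructor; intro a h; exact G.ne_of_adj h.1 rfl

theorem stmt_4 {V : Type*} [Fintype V] (G : SimpleGraph V) (u v w : V)
    (hvw : v ≠ w) (hu : G.neighborSet u = {v, w}) (hadj : G.Adj v w)
    (hcn : ∃ x, x ≠ u ∧ x ∈ G.neighborSet v ∩ G.neighborSet w) :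
    MaximalClique G {u, v, w} ∧
    {S : Set V | MaximalClique G S ∧ 2 ≤ S.ncard} =
      insert {u, v, w} {S : Set V | MaximalClique (delVert G u) S ∧ 2 ≤ S.ncard} := by
  have hmem : ∀ a, G.Adj u a ↔ a = v ∨ a = w := by
    intro a
    have := Set.ext_iff.mp hu a
    simpa [SimpleGraph.mem_neighborSet] using this
  have huv : G.Adj u v := (hmem v).mpr (Or.inl rfl)
  have huw : G.Adj u w := (hmem w).mpr (Or.inr rfl)
  have hunev : u ≠ v := huv.ne
  have hunew : u ≠ w := huw.ne
  have hclique : G.IsClique {u, v, w} := by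
    intro a ha b hb hab
    simp only [Set.mem_insert_iff, Set.mem_singleton_iff] at ha hb
    rcases ha with rfl | rfl | rfl <;> rcases hb with rfl | rfl | rfl <;>
      first
        | exact absurd rfl hab
        | exact huv | exact huw | exact huv.symm | exact hadj
        | exact huw.symm | exact hadj.symm
  have hmax : MaximalClique G {u, v, w} := by
    refine ⟨hclique, ?_⟩
    intro T hT hsub
    apply Set.Subset.antisymm hsub
    intro t ht
    by_contra htn
    simp only [Set.mem_insert_iff, Set.mem_singleton_iff, not_or] at htn
    obtain ⟨htu, htv, htw⟩ := htn
    have hadjut : G.Adj u t := hT (hsub (by simp)) ht (Ne.symm htu)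
    rcases (hmem t).mp hadjut with rfl | rfl
    · exact htv rfl
    · exact htw rfl
  refine ⟨hmax, ?_⟩
  ext S
  simp only [Set.mem_setOf_eq, Set.mem_insert_iff]
  constructor
  · rintro ⟨⟨hSc, hSm⟩, hS2⟩
    by_cases hus : u ∈ S
    · left
      refine hSm _ hclique ?_
      intro t ht
      by_cases htu : t = u
      · simp [htu]
      · have : G.Adj u t := hSc hus ht (Ne.symm htu)
        rcases (hmem t).mp this with rfl | rfl <;> simp
    · right
      refine ⟨⟨?_, ?_⟩, hS2⟩
      · intro a ha b hb hab
        exact ⟨hSc ha hb hab, fun h => hus (h ▸ ha), fun h => hus (h ▸ hb)⟩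
      · intro T hT hsub
        exact hSm T (fun a ha b hb hab => (hT ha hb hab).1) hsub
  · rintro (rfl | ⟨⟨hSc, hSm⟩, hS2⟩)
    · refine ⟨hmax, ?_⟩
      have h3 : ({u, v, w} : Set V).ncard = 3 := by
        rw [Set.ncard_insert_of_notMem (by simp [hunev, hunew]),
          Set.ncard_insert_of_notMem (by simp [hvw]), Set.ncard_singleton]
      omega
    · have husS : u ∉ S := by
        intro huS
        obtain ⟨a, b, haS, hbS, hab⟩ := (Set.one_lt_ncard_iff (Set.toFinite S)).mp (by omega)
        by_cases hau : a = u
        · subst hau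
          exact (hSc haS hbS hab).2.1 rfl
        · exact (hSc huS haS (Ne.symm hau)).2.1 rfl
      have hScG : G.IsClique S := fun a ha b hb hab => (hSc ha hb hab).1
      refine ⟨⟨hScG, ?_⟩, hS2⟩
      intro T hT hsub
      by_cases huT : u ∈ T
      · exfalso
        have hsubT : S ⊆ {v, w} := by
          intro t ht
          have htu : t ≠ u := fun h => husS (h ▸ ht)
          have : G.Adj u t := hT huT (hsub ht) (Ne.symm htu)
          rcases (hmem t).mp this with rfl | rfl <;> simp
        have hS : S = {v, w} := by
          refine Set.eq_of_subset_of_ncard_le hsubT ?_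
          rw [Set.ncard_pair hvw]; exact hS2
        obtain ⟨x, hxu, hx⟩ := hcn
        have hvx : G.Adj v x := hx.1
        have hwx : G.Adj w x := hx.2
        have hxv : x ≠ v := hvx.ne'
        have hxw : x ≠ w := hwx.ne'
        have hc2 : (delVert G u).IsClique {v, w, x} := by
          intro a ha b hb hab
          simp only [Set.mem_insert_iff, Set.mem_singleton_iff] at ha hb
          rcases ha with rfl | rfl | rfl <;> rcases hb with rfl | rfl | rfl <;>
            first
              | exact absurd rfl hab
              | exact ⟨hadj, hunev.symm, hunew.symm⟩
              | exact ⟨hadj.symm, hunew.symm, hunev.symm⟩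
              | exact ⟨hvx, hunev.symm, hxu⟩
              | exact ⟨hvx.symm, hxu, hunev.symm⟩
              | exact ⟨hwx, hunew.symm, hxu⟩
              | exact ⟨hwx.symm, hxu, hunew.symm⟩
        have heq := hSm _ hc2 (by rw [hS]; intro t ht; simp only [Set.mem_insert_iff,
          Set.mem_singleton_iff] at ht ⊢; tauto)
        rw [hS] at heq
        have : x ∈ ({v, w} : Set V) := heq ▸ (by simp)
        simp only [Set.mem_insert_iff, Set.mem_singleton_iff] at this
        tauto
      · exact hSm T
          (fun a ha b hb hab => ⟨hT ha hb hab, fun h => huT (h ▸ ha), fun h => huT (h ▸ hb)⟩)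
          hsub
end

section
/- Let (u,v) be an edge of a finite simple graph G such that u and v have no common neighbor. Then {u,v} is a maximal clique of G, and the maximal cliques of size ≥ 2 of G are exactly {u,v} together with the maximal cliques of size ≥ 2 of the graph G' obtained by deleting the edge (u,v). -/
open SimpleGraph

theorem stmt_5 {V : Type*} [Fintype V] (G : SimpleGraph V) (u v : V)
    (hadj : G.Adj u v) (hcn : G.neighborSet u ∩ G.neighborSet v = ∅) :
    MaximalClique G {u, v} ∧
    {S : Set V | MaximalClique G S ∧ 2 ≤ S.ncard} =
      insert {u, v}
        {S : Set V | MaximalClique (G.deleteEdges {s(u, v)}) S ∧ 2 ≤ S.ncard} := by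

  have hne : u ≠ v := hadj.ne
  have huv : G.IsClique {u, v} := by
    intro a ha b hb hab
    simp only [Set.mem_insert_iff, Set.mem_singleton_iff] at ha hb
    rcases ha with rfl | rfl <;> rcases hb with rfl | rfl <;>
      first | exact absurd rfl hab | exact hadj | exact hadj.symm
  have hmax : MaximalClique G {u, v} := by
    refine ⟨huv, fun T hT hsub => ?_⟩
    refine Set.Subset.antisymm hsub fun w hw => ?_
    by_contra hwne
    simp only [Set.mem_insert_iff, Set.mem_singleton_iff, not_or] at hwne
    have h1 : G.Adj u w := hT (hsub (by simp)) hw (Ne.symm hwne.1)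
    have h2 : G.Adj v w := hT (hsub (by simp)) hw (Ne.symm hwne.2)
    have : w ∈ G.neighborSet u ∩ G.neighborSet v := ⟨h1, h2⟩
    rw [hcn] at this
    exact this
  have key : ∀ W : Set V, G.IsClique W → ¬(u ∈ W ∧ v ∈ W) →
      (G.deleteEdges {s(u, v)}).IsClique W := by
    intro W hW hn a ha b hb hab
    refine SimpleGraph.deleteEdges_adj.2 ⟨hW ha hb hab, ?_⟩
    simp only [Set.mem_singleton_iff, Sym2.eq_iff]
    rintro (⟨rfl, rfl⟩ | ⟨rfl, rfl⟩)
    · exact hn ⟨ha, hb⟩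
    · exact hn ⟨hb, ha⟩
  refine ⟨hmax, ?_⟩
  ext S
  simp only [Set.mem_setOf_eq, Set.mem_insert_iff]
  constructor
  · rintro ⟨⟨hS, hSmax⟩, hcard⟩
    by_cases hboth : u ∈ S ∧ v ∈ S
    · left
      exact (hmax.2 S hS (Set.insert_subset hboth.1
        (Set.singleton_subset_iff.2 hboth.2))).symm
    · right
      refine ⟨⟨key S hS hboth, fun T hT hsub => ?_⟩, hcard⟩
      exact hSmax T (hT.mono (SimpleGraph.deleteEdges_le _)) hsub
  · rintro (rfl | ⟨⟨hS, hSmax⟩, hcard⟩)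
    · exact ⟨hmax, by rw [Set.ncard_pair hne]⟩
    · have hnboth : ¬(u ∈ S ∧ v ∈ S) := by
        rintro ⟨hu, hv⟩
        have := SimpleGraph.deleteEdges_adj.1 (hS hu hv hne)
        simp at this
      refine ⟨⟨hS.mono (SimpleGraph.deleteEdges_le _), fun T hT hsub => ?_⟩, hcard⟩
      by_cases hTboth : u ∈ T ∧ v ∈ T
      · exfalso
        have hTuv : {u, v} = T := hmax.2 T hT (Set.insert_subset hTboth.1
          (Set.singleton_subset_iff.2 hTboth.2))
        have hSsub : S ⊆ ({u, v} : Set V) := hTuv ▸ hsub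
        have hSeq : S = ({u, v} : Set V) := Set.eq_of_subset_of_ncard_le hSsub
          (by rw [Set.ncard_pair hne]; exact hcard) (Set.toFinite _)
        exact hnboth ⟨hSeq ▸ (by simp : u ∈ ({u, v} : Set V)),
          hSeq ▸ (by simp : v ∈ ({u, v} : Set V))⟩
      · exact hSmax T (key T hT hTboth) hsub
end

section
/- Let (R, P, X) be a subproblem where R is a clique and every vertex of P ∪ X is adjacent to all of R. Let u ∈ P have exactly one neighbor v in P. If there exists w ∈ X adjacent to both u and v, then R ∪ {u, v} is not a maximal clique of G, and neither is R ∪ {u}. -/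
open SimpleGraph

theorem stmt_9 {V : Type*} [Fintype V] (G : SimpleGraph V) (R P X : Set V)
    (hR : G.IsClique R)
    (hadj : ∀ x ∈ P ∪ X, ∀ r ∈ R, G.Adj x r)
    (hdisj : Disjoint P X)
    (u v : V) (hu : u ∈ P)
    (hNu : G.neighborSet u ∩ P = {v})
    (hw : ∃ w ∈ X, G.Adj w u ∧ G.Adj w v) :
    ¬ MaximalClique G (R ∪ {u, v}) ∧ ¬ MaximalClique G (R ∪ {u}) := by
  obtain ⟨w, hwX, hwu, hwv⟩ := hw
  have hvP : v ∈ P := by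
    have : v ∈ G.neighborSet u ∩ P := hNu ▸ rfl
    exact this.2
  have huv : G.Adj u v := by
    have : v ∈ G.neighborSet u ∩ P := hNu ▸ rfl
    exact this.1
  have hwnu : w ≠ u := fun h => (hdisj.ne_of_mem hu hwX) h.symm
  have hwnv : w ≠ v := fun h => (hdisj.ne_of_mem hvP hwX) h.symm
  have hwnR : w ∉ R := fun h => G.ne_of_adj (hadj w (Or.inr hwX) w h) rfl
  have hadjR : ∀ x ∈ ({u, v, w} : Set V), ∀ r ∈ R, G.Adj x r := by
    rintro x (rfl | rfl | rfl) r hr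
    · exact hadj x (Or.inl hu) r hr
    · exact hadj x (Or.inl hvP) r hr
    · exact hadj x (Or.inr hwX) r hr
  have hclique : G.IsClique (R ∪ {u, v, w}) := by
    intro a ha b hb hab
    rcases ha with ha | ha <;> rcases hb with hb | hb
    · exact hR ha hb hab
    · exact (hadjR b hb a ha).symm
    · exact hadjR a ha b hb
    · rcases ha with rfl | rfl | rfl <;> rcases hb with rfl | rfl | rfl <;>
        first
        | exact absurd rfl hab
        | exact huv
        | exact huv.symm
        | exact hwu
        | exact hwu.symm
        | exact hwv
        | exact hwv.symm
  constructor
  · rintro ⟨-, hmax⟩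
    have hsub : R ∪ {u, v} ⊆ R ∪ {u, v, w} := by
      rintro x (hx | hx)
      · exact Or.inl hx
      · rcases hx with rfl | rfl
        · exact Or.inr (Or.inl rfl)
        · exact Or.inr (Or.inr (Or.inl rfl))
    have h := hmax _ hclique hsub
    have : w ∈ R ∪ ({u, v} : Set V) := h ▸ Or.inr (Or.inr (Or.inr rfl))
    rcases this with h | h | h
    · exact hwnR h
    · exact hwnu h
    · exact hwnv h
  · rintro ⟨-, hmax⟩
    have hsub : R ∪ {u} ⊆ R ∪ {u, v, w} := by
      rintro x (hx | hx)
      · exact Or.inl hx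
      · exact Or.inr (Or.inl hx)
    have h := hmax _ hclique hsub
    have : w ∈ R ∪ ({u} : Set V) := h ▸ Or.inr (Or.inr (Or.inr rfl))
    rcases this with h | h
    · exact hwnR h
    · exact hwnu h
end

section
/- Let (R, P, X) be a subproblem where R is a clique and every vertex of P ∪ X is adjacent to all of R. Let u ∈ P with N(u) ∩ P = {v}, and suppose no vertex of X is adjacent to both u and v. Then R ∪ {u, v} is a maximal clique of G. -/
open SimpleGraph

theorem stmt_10 {V : Type*} [Fintype V] (G : SimpleGraph V) (R P X : Set V)
    (hR : G.IsClique R)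
    (hadj : ∀ x ∈ P ∪ X, ∀ r ∈ R, G.Adj x r)
    (hdisj : Disjoint P X)
    (hclosed : ∀ x, (∀ r ∈ R, G.Adj x r) → x ∈ R ∪ P ∪ X)
    (u v : V) (hu : u ∈ P)
    (hNu : G.neighborSet u ∩ P = {v})
    (hw : ¬ ∃ w ∈ X, G.Adj w u ∧ G.Adj w v) :
    MaximalClique G (R ∪ {u, v}) := by
  have hvmem : v ∈ G.neighborSet u ∩ P := by rw [hNu]; rfl
  have huv : G.Adj u v := hvmem.1
  have hvP : v ∈ P := hvmem.2
  have hune : u ≠ v := G.ne_of_adj huv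
  have hclique : G.IsClique (R ∪ {u, v}) := by
    intro a ha b hb hab
    rcases ha with ha | ha
    · rcases hb with hb | hb
      · exact hR ha hb hab
      · rcases hb with rfl | rfl
        · exact (hadj b (Or.inl hu) a ha).symm
        · exact (hadj b (Or.inl hvP) a ha).symm
    · rcases hb with hb | hb
      · rcases ha with rfl | rfl
        · exact hadj a (Or.inl hu) b hb
        · exact hadj a (Or.inl hvP) b hb
      · rcases ha with rfl | rfl <;> rcases hb with rfl | rfl
        · exact absurd rfl hab
        · exact huv
        · exact huv.symm
        · exact absurd rfl hab
  refine ⟨hclique, ?_⟩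
  intro T hT hST
  by_contra hne
  obtain ⟨t, htT, htS⟩ : ∃ t ∈ T, t ∉ R ∪ {u, v} := by
    by_contra h
    push_neg at h
    exact hne (Set.Subset.antisymm hST h)
  have htR : t ∉ R := fun h => htS (Or.inl h)
  have htu : t ≠ u := fun h => htS (Or.inr (Or.inl h))
  have htv : t ≠ v := fun h => htS (Or.inr (Or.inr h))
  have htadjR : ∀ r ∈ R, G.Adj t r := by
    intro r hr
    exact hT htT (hST (Or.inl hr)) (fun h => htR (h ▸ hr))
  have htadju : G.Adj t u := hT htT (hST (Or.inr (Or.inl rfl))) htu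
  have htadjv : G.Adj t v := hT htT (hST (Or.inr (Or.inr rfl))) htv
  rcases hclosed t htadjR with (ht | ht) | ht
  · exact htR ht
  · have : t ∈ G.neighborSet u ∩ P := ⟨htadju.symm, ht⟩
    rw [hNu] at this
    exact htv this
  · exact hw ⟨t, ht, htadju, htadjv⟩
end

section
/- Let (R, P, X) be a subproblem where R is a clique, every vertex of P ∪ X is adjacent to all of R, and every vertex adjacent to all of R lies in R ∪ P ∪ X. Let u, v ∈ X with N(u) ∩ P ⊆ N(v) ∩ P. Then for any S ⊆ P, the clique R ∪ S fails the maximality test against X (i.e., some vertex of X is adjacent to all of R ∪ S) if and only if it fails the maximality test against X \ {u}. -/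
open SimpleGraph

theorem stmt_13 {V : Type*} [Fintype V] (G : SimpleGraph V) (R P X : Set V)
    (hR : G.IsClique R)
    (hadj : ∀ x ∈ P ∪ X, ∀ r ∈ R, G.Adj x r)
    (hdisj : Disjoint P X)
    (hclosed : ∀ x, (∀ r ∈ R, G.Adj x r) → x ∈ R ∪ P ∪ X)
    (u v : V) (hu : u ∈ X) (hv : v ∈ X) (hne : u ≠ v)
    (hsub : G.neighborSet u ∩ P ⊆ G.neighborSet v ∩ P) :
    ∀ S ⊆ P, G.IsClique (R ∪ S) →
      ((∃ w ∈ X, ∀ y ∈ R ∪ S, G.Adj w y) ↔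
        (∃ w ∈ X \ {u}, ∀ y ∈ R ∪ S, G.Adj w y)) := by
  intro S hSP _hclique
  constructor
  · rintro ⟨w, hw, hwall⟩
    by_cases hwu : w = u
    · refine ⟨v, ⟨hv, fun h => hne (h.symm)⟩, ?_⟩
      intro y hy
      rcases hy with hyR | hyS
      · exact hadj v (Or.inr hv) y hyR
      · have hus : G.Adj u y := by
          rw [hwu] at hwall; exact hwall y (Or.inr hyS)
        have : y ∈ G.neighborSet v ∩ P := hsub ⟨hus, hSP hyS⟩
        exact this.1
    · exact ⟨w, ⟨hw, hwu⟩, hwall⟩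
  · rintro ⟨w, hw, hwall⟩
    exact ⟨w, hw.1, hwall⟩
end
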